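/- Let K ⊆ ℝ^d be a convex body and ε > 0, and suppose K has width at least ε in every direction, i.e. h_K(u) + h_K(−u) ≥ ε for every unit vector u. Let c = (1/vol(K)) ∫_K x dx be the centroid of K. Then the closed Euclidean ball of radius ε/(d+1) centered at c is contained in K. -/

import Mathlib

open MeasureTheory Metric Set Pointwise Filter
open scoped RealInnerProductSpace ENNReal
set_option maxHeartbeats 1000000

/-- Support function of a set. -/
noncomputable def suppFn {d : ℕ} (K : Set (EuclideanSpace ℝ (Fin d)))
    (u : EuclideanSpace ℝ (Fin d)) : ℝ :=
  sSup ((fun x => ⟪u, x⟫) '' K)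

lemma dir_bound (d : ℕ) (K : Set (EuclideanSpace ℝ (Fin d)))
    (hKc : IsCompact K) (hKconv : Convex ℝ K) (hne : K.Nonempty)
    (hVpos : 0 < volume K)
    (u : EuclideanSpace ℝ (Fin d)) (ε : ℝ) (hε : 0 < ε)
    (hw : ε ≤ suppFn K u + suppFn K (-u)) :
    ∫ x in K, ⟪u, x⟫ ≤ (volume K).toReal * (suppFn K u - ε / ((d : ℝ) + 1)) := by
  have hKm : MeasurableSet K := hKc.measurableSet
  set V : ℝ := (volume K).toReal with hVdef
  have hVfin : volume K ≠ ⊤ := hKc.measure_lt_top.ne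
  have hV : 0 < V := ENNReal.toReal_pos hVpos.ne' hVfin
  have hcont : Continuous (fun x : EuclideanSpace ℝ (Fin d) => ⟪u, x⟫) :=
    continuous_const.inner continuous_id
  have hbdd : BddAbove ((fun x => ⟪u, x⟫) '' K) := (hKc.image hcont).bddAbove
  set b : ℝ := suppFn K u with hbdef
  have hb : ∀ x ∈ K, ⟪u, x⟫ ≤ b := fun x hx => le_csSup hbdd ⟨x, hx, rfl⟩
  obtain ⟨p, hp, hmin⟩ := hKc.exists_isMinOn hne hcont.continuousOn
  set a : ℝ := ⟪u, p⟫ with hadef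
  have hmin' : ∀ x ∈ K, a ≤ ⟪u, x⟫ := fun x hx => hmin hx
  have hneg : suppFn K (-u) ≤ -a := by
    apply csSup_le (hne.image _)
    rintro _ ⟨x, hx, rfl⟩
    have := hmin' x hx
    show ⟪-u, x⟫ ≤ -a
    rw [inner_neg_left]
    linarith
  set w : ℝ := b - a with hwdef
  have hεw : ε ≤ w := by
    have := hw
    linarith
  have hwpos : 0 < w := hε.trans_le hεw
  have hd1 : (0:ℝ) < (d : ℝ) + 1 := by positivity
  -- the nonnegative function g
  set g : EuclideanSpace ℝ (Fin d) → ℝ := fun x => ⟪u, x⟫ - a with hgdef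
  have hgcont : Continuous g := hcont.sub continuous_const
  have hgint : IntegrableOn g K volume := hgcont.continuousOn.integrableOn_compact hKc
  have hgnn : ∀ x ∈ K, 0 ≤ g x := fun x hx => by
    have := hmin' x hx; simp only [hgdef]; linarith
  have hgle : ∀ x ∈ K, g x ≤ w := fun x hx => by
    have := hb x hx; simp only [hgdef, hwdef]; linarith
  -- layer cake
  have hlc : ∫ x in K, g x
      = ∫ t in Set.Ioi (0:ℝ), ENNReal.toReal ((volume.restrict K) {x | t < g x}) := by
    apply Integrable.integral_eq_integral_meas_lt hgint
    exact (ae_restrict_iff' hKm).mpr (Eventually.of_forall hgnn)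
  set F : ℝ → ℝ := fun t => ENNReal.toReal ((volume.restrict K) {x | t < g x}) with hFdef
  have hFeq : ∀ t, F t = (volume ({x | t < g x} ∩ K)).toReal := fun t => by
    simp only [hFdef]
    rw [Measure.restrict_apply (isOpen_lt continuous_const hgcont).measurableSet]
  have hFfin : ∀ t : ℝ, volume ({x | t < g x} ∩ K) ≠ ⊤ :=
    fun t => ((measure_mono inter_subset_right).trans_lt hKc.measure_lt_top).ne
  have hFnn : ∀ t, 0 ≤ F t := fun t => ENNReal.toReal_nonneg
  have hFleV : ∀ t, F t ≤ V := fun t => by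
    rw [hFeq]
    exact ENNReal.toReal_mono hVfin (measure_mono inter_subset_right)
  -- F vanishes beyond w
  have hFzero : ∀ t ∈ Set.Ioi (0:ℝ) \ Set.Ioc 0 w, F t = 0 := by
    intro t ht
    have htw : w < t := by
      rcases ht with ⟨h1, h2⟩
      simp only [Set.mem_Ioc, not_and, not_le] at h2
      exact h2 h1
    rw [hFeq]
    have : {x | t < g x} ∩ K = ∅ := by
      ext x
      simp only [Set.mem_inter_iff, Set.mem_setOf_eq, Set.mem_empty_iff_false, iff_false,
        not_and]
      intro hgx hxK
      exact absurd (hgle x hxK) (by linarith)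
    rw [this]
    simp
  -- restrict the integral to Ioc 0 w
  have hres : ∫ t in Set.Ioi (0:ℝ), F t = ∫ t in Set.Ioc (0:ℝ) w, F t :=
    setIntegral_eq_of_subset_of_ae_diff_eq_zero (μ := volume) nullMeasurableSet_Ioi
      Ioc_subset_Ioi_self (Eventually.of_forall hFzero)
  -- pointwise bound on Ioc 0 w
  have hkey : ∀ t ∈ Set.Ioc (0:ℝ) w, F t ≤ V - (t / w) ^ d * V := by
    intro t ht
    obtain ⟨ht0, htw⟩ := ht
    set lam : ℝ := t / w with hlamdef
    have hlam0 : 0 < lam := div_pos ht0 hwpos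
    have hlam1 : lam ≤ 1 := (div_le_one hwpos).mpr htw
    set S : Set (EuclideanSpace ℝ (Fin d)) :=
      (fun x => (1 - lam) • p + lam • x) '' K with hSdef
    have hSK : S ⊆ K := by
      rintro _ ⟨x, hx, rfl⟩
      exact hKconv hp hx (by linarith) hlam0.le (by ring)
    have hScomp : IsCompact S := hKc.image (continuous_const.add (continuous_id.const_smul lam))
    have hSvol : volume S = ENNReal.ofReal (lam ^ d) * volume K := by
      have h1 : S = (fun z => (1 - lam) • p + z) '' ((fun x => lam • x) '' K) := by
        rw [← Set.image_comp]; rfl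
      have h2 : (fun x : EuclideanSpace ℝ (Fin d) => lam • x) '' K = lam • K := rfl
      have h3 : (fun z : EuclideanSpace ℝ (Fin d) => (1 - lam) • p + z) '' (lam • K)
          = ((1 - lam) • p) +ᵥ (lam • K) := by simp [← image_vadd, vadd_eq_add]
      rw [h1, h2, h3, measure_vadd, Measure.addHaar_smul_of_nonneg volume hlam0.le,
        finrank_euclideanSpace_fin]
    -- disjointness
    have hdisj : Disjoint ({x | t < g x} ∩ K) S := by
      rw [Set.disjoint_left]
      rintro z ⟨hz1, _⟩ ⟨x, hx, rfl⟩
      have hgz : g ((1 - lam) • p + lam • x) = lam * g x := by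
        simp only [hgdef, inner_add_right, real_inner_smul_right]
        ring
      have : g ((1 - lam) • p + lam • x) ≤ t := by
        rw [hgz]
        calc lam * g x ≤ lam * w := by
              have := hgle x hx
              nlinarith [hgnn x hx]
            _ = t := by
              rw [hlamdef]; field_simp
      simp only [Set.mem_setOf_eq] at hz1
      linarith
    have hAmeas : MeasurableSet S := hScomp.measurableSet
    have hsum : volume ({x | t < g x} ∩ K) + volume S ≤ volume K := by
      rw [← measure_union hdisj hAmeas]
      exact measure_mono (Set.union_subset inter_subset_right hSK)
    have hSvolR : (volume S).toReal = lam ^ d * V := by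
      rw [hSvol, ENNReal.toReal_mul, ENNReal.toReal_ofReal (by positivity)]
    have hsumR : (volume ({x | t < g x} ∩ K)).toReal + lam ^ d * V ≤ V := by
      rw [← hSvolR, ← ENNReal.toReal_add (hFfin t) (by rw [hSvol]; exact
        (ENNReal.mul_lt_top ENNReal.ofReal_lt_top hKc.measure_lt_top).ne)]
      exact ENNReal.toReal_mono hVfin hsum
    rw [hFeq]
    linarith
  -- integrability facts for comparison
  have hFmeas : Measurable F := by
    apply Measurable.ennreal_toReal
    exact Antitone.measurable (fun s t hst => measure_mono (fun x hx => lt_of_le_of_lt hst hx))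
  have hFint : IntegrableOn F (Set.Ioc 0 w) volume := by
    apply Integrable.mono' (integrableOn_const (C := V) measure_Ioc_lt_top.ne)
      hFmeas.aestronglyMeasurable
    exact ae_of_all _ (fun t => by rw [Real.norm_eq_abs, abs_of_nonneg (hFnn t)]; exact hFleV t)
  have hcb : Continuous (fun t : ℝ => V - (t / w) ^ d * V) :=
    continuous_const.sub (((continuous_id.div_const w).pow d).mul continuous_const)
  have hbint : IntegrableOn (fun t : ℝ => V - (t / w) ^ d * V) (Set.Ioc 0 w) volume :=
    hcb.integrableOn_Ioc
  have hcomp : ∫ t in Set.Ioc (0:ℝ) w, F t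
      ≤ ∫ t in Set.Ioc (0:ℝ) w, (V - (t / w) ^ d * V) :=
    setIntegral_mono_on hFint hbint measurableSet_Ioc hkey
  -- compute the bounding integral
  have hval : ∫ t in Set.Ioc (0:ℝ) w, (V - (t / w) ^ d * V) = V * w * d / ((d : ℝ) + 1) := by
    rw [← intervalIntegral.integral_of_le hwpos.le]
    have : ∀ t : ℝ, V - (t / w) ^ d * V = V - V * (t / w) ^ d := fun t => by ring
    simp only [this]
    rw [intervalIntegral.integral_sub intervalIntegrable_const]
    · simp only [div_pow]
      rw [intervalIntegral.integral_const_mul, intervalIntegral.integral_div, integral_pow]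
      simp only [intervalIntegral.integral_const, smul_eq_mul]
      field_simp
      ring
    · exact (((continuous_id.div_const w).pow d).intervalIntegrable 0 w).const_mul V
  -- put everything together
  have hgbound : ∫ x in K, g x ≤ V * w * (d : ℝ) / ((d : ℝ) + 1) := by
    rw [hlc, hres]
    simpa [hval] using hcomp
  have hsplit : ∫ x in K, ⟪u, x⟫ = (∫ x in K, g x) + V * a := by
    have : ∀ x : EuclideanSpace ℝ (Fin d), ⟪u, x⟫ = g x + a := fun x => by
      simp [hgdef]
    simp only [this]
    rw [integral_add hgint (integrableOn_const hKc.measure_lt_top.ne)]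
    rw [setIntegral_const, smul_eq_mul, hVdef]
    rfl
  rw [hsplit]
  have hfinal : V * w * (d : ℝ) / ((d : ℝ) + 1) + V * a ≤ V * (b - ε / ((d : ℝ) + 1)) := by
    have h1 : V * w * (d : ℝ) / ((d : ℝ) + 1) + V * a = V * (b - w / ((d : ℝ) + 1)) := by
      field_simp
      ring
    rw [h1]
    have h2 : ε / ((d : ℝ) + 1) ≤ w / ((d : ℝ) + 1) := by gcongr
    nlinarith
  linarith

theorem centroid_ball_in_body (d : ℕ) (hd : 1 ≤ d)
    (K : Set (EuclideanSpace ℝ (Fin d)))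
    (hKc : IsCompact K) (hKconv : Convex ℝ K) (hKint : (interior K).Nonempty)
    (ε : ℝ) (hε : 0 < ε)
    (hwidth : ∀ u : EuclideanSpace ℝ (Fin d), ‖u‖ = 1 → ε ≤ suppFn K u + suppFn K (-u)) :
    closedBall (((volume K).toReal)⁻¹ • ∫ x in K, x) (ε / ((d : ℝ) + 1)) ⊆ K := by
  intro y hy
  by_contra hyK
  have hne : K.Nonempty := hKint.mono interior_subset
  have hVpos : 0 < volume K :=
    (IsOpen.measure_pos volume isOpen_interior hKint).trans_le (measure_mono interior_subset)
  have hVfin : volume K ≠ ⊤ := hKc.measure_lt_top.ne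
  set V : ℝ := (volume K).toReal with hVdef
  have hV : 0 < V := ENNReal.toReal_pos hVpos.ne' hVfin
  obtain ⟨f, s, h1, h2⟩ := geometric_hahn_banach_closed_point hKconv hKc.isClosed hyK
  set v : EuclideanSpace ℝ (Fin d) := (InnerProductSpace.toDual ℝ _).symm f with hvdef
  have hv : ∀ x, ⟪v, x⟫ = f x := fun x => InnerProductSpace.toDual_symm_apply
  have hvne : v ≠ 0 := by
    intro h0
    obtain ⟨q, hq⟩ := hne
    have hfq : f q = 0 := by rw [← hv, h0, inner_zero_left]
    have hfy : f y = 0 := by rw [← hv, h0, inner_zero_left]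
    have := (h1 q hq).trans h2
    rw [hfq, hfy] at this
    exact lt_irrefl _ this
  set u : EuclideanSpace ℝ (Fin d) := ‖v‖⁻¹ • v with hudef
  have hu : ‖u‖ = 1 := norm_smul_inv_norm hvne
  have hvnorm : 0 < ‖v‖⁻¹ := inv_pos.mpr (norm_pos_iff.mpr hvne)
  have hux : ∀ x, ⟪u, x⟫ = ‖v‖⁻¹ * f x := fun x => by
    rw [hudef, real_inner_smul_left, hv]
  have hdir := dir_bound d K hKc hKconv hne hVpos u ε hε (hwidth u hu)
  set b : ℝ := suppFn K u with hbdef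
  have hd1 : (0:ℝ) < (d : ℝ) + 1 := by positivity
  -- centroid estimate
  have hid : IntegrableOn (fun x : EuclideanSpace ℝ (Fin d) => x) K volume :=
    continuous_id.continuousOn.integrableOn_compact hKc
  have hcentroid : ⟪u, (V⁻¹ • ∫ x in K, x : EuclideanSpace ℝ (Fin d))⟫
      = V⁻¹ * ∫ x in K, ⟪u, x⟫ := by
    rw [real_inner_smul_right, ← integral_inner hid]
  have hc_le : ⟪u, (V⁻¹ • ∫ x in K, x : EuclideanSpace ℝ (Fin d))⟫ ≤ b - ε / ((d : ℝ) + 1) := by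
    rw [hcentroid]
    have := mul_le_mul_of_nonneg_left hdir (le_of_lt (inv_pos.mpr hV))
    calc V⁻¹ * ∫ x in K, ⟪u, x⟫ ≤ V⁻¹ * (V * (b - ε / ((d : ℝ) + 1))) := this
      _ = b - ε / ((d : ℝ) + 1) := by field_simp
  -- y is close to centroid
  have hyc : ⟪u, y⟫ ≤ b := by
    have h3 : ⟪u, y - (V⁻¹ • ∫ x in K, x : EuclideanSpace ℝ (Fin d))⟫ ≤ ε / ((d : ℝ) + 1) := by
      calc ⟪u, y - (V⁻¹ • ∫ x in K, x : EuclideanSpace ℝ (Fin d))⟫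
          ≤ ‖u‖ * ‖y - (V⁻¹ • ∫ x in K, x : EuclideanSpace ℝ (Fin d))‖ := real_inner_le_norm _ _
        _ = ‖y - (V⁻¹ • ∫ x in K, x : EuclideanSpace ℝ (Fin d))‖ := by rw [hu, one_mul]
        _ ≤ ε / ((d : ℝ) + 1) := by
            rw [← dist_eq_norm]
            exact mem_closedBall.mp hy
    have h4 : ⟪u, y⟫ = ⟪u, (V⁻¹ • ∫ x in K, x : EuclideanSpace ℝ (Fin d))⟫
        + ⟪u, y - (V⁻¹ • ∫ x in K, x : EuclideanSpace ℝ (Fin d))⟫ := by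
      rw [← inner_add_right]
      congr 1
      abel
    rw [h4]
    linarith
  -- but separation says ⟪u,y⟫ > b
  have hsep : b < ⟪u, y⟫ := by
    have hble : b ≤ ‖v‖⁻¹ * s := by
      apply csSup_le (hne.image _)
      rintro _ ⟨x, hx, rfl⟩
      show ⟪u, x⟫ ≤ ‖v‖⁻¹ * s
      rw [hux]
      exact mul_le_mul_of_nonneg_left (h1 x hx).le hvnorm.le
    have : ‖v‖⁻¹ * s < ‖v‖⁻¹ * f y := by
      exact mul_lt_mul_of_pos_left h2 hvnorm
    rw [hux y]
    linarith
  linarith
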